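/- (Minty's trick in Lebesgue spaces.) Let Ω ⊂ ℝ^N be a measurable set of finite Lebesgue measure, let q₁, q₂ ∈ (1,2), and let L > 0. Let (ζ_n) be a sequence of nondecreasing L-Lipschitz continuous functions ζ_n : ℝ → ℝ with ζ_n(0) = 0 that converges pointwise on ℝ to a function ζ. Let (v_n) be a sequence in L^{q₂}(Ω) and v ∈ L^{q₂}(Ω) such that for every g ∈ L^{q₂/(q₂−1)}(Ω), ∫_Ω v_n g dx → ∫_Ω v g dx; and suppose the functions ζ_n∘v_n belong to L^{q₁}(Ω) and converge strongly in L^{q₁}(Ω) to a function u ∈ L^{q₁}(Ω). Then u = ζ∘v almost everywhere in Ω. -/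

import Mathlib

open MeasureTheory Filter
open scoped ENNReal NNReal

lemma minty_key {α : Type*} [MeasurableSpace α] (μ : Measure α) [IsFiniteMeasure μ]
    (q₁ q₂ : ℝ) (hq₁ : 1 < q₁) (hq₂ : 1 < q₂)
    (L : ℝ) (hL : 0 < L)
    (ζn : ℕ → ℝ → ℝ) (ζ : ℝ → ℝ)
    (hζn_mono : ∀ n, Monotone (ζn n))
    (hζn_lip : ∀ n, LipschitzWith (Real.toNNReal L) (ζn n))
    (hζn_ptwise : ∀ s : ℝ, Tendsto (fun n => ζn n s) atTop (nhds (ζ s)))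
    (vn : ℕ → α → ℝ) (v : α → ℝ)
    (hvn : ∀ n, MemLp (vn n) (ENNReal.ofReal q₂) μ)
    (hv : MemLp v (ENNReal.ofReal q₂) μ)
    (hweak : ∀ g : α → ℝ, MemLp g (ENNReal.ofReal (q₂ / (q₂ - 1))) μ →
      Tendsto (fun n => ∫ x, vn n x * g x ∂μ) atTop (nhds (∫ x, v x * g x ∂μ)))
    (u : α → ℝ)
    (hu : MemLp u (ENNReal.ofReal q₁) μ)
    (hζnvn : ∀ n, MemLp (fun x => ζn n (vn n x)) (ENNReal.ofReal q₁) μ)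
    (hstrong : Tendsto
      (fun n => eLpNorm (fun x => ζn n (vn n x) - u x) (ENNReal.ofReal q₁) μ)
      atTop (nhds 0)) :
    ∀ᵐ x ∂μ, u x ≤ ζ (v x) := by
  have hLL : ((Real.toNNReal L : ℝ≥0) : ℝ) = L := Real.coe_toNNReal L hL.le
  -- ζ is Lipschitz
  have hζlip : LipschitzWith (Real.toNNReal L) ζ := by
    rw [lipschitzWith_iff_dist_le_mul]
    intro a b
    refine le_of_tendsto (((hζn_ptwise a).dist (hζn_ptwise b))) ?_
    exact Eventually.of_forall fun n =>
      (lipschitzWith_iff_dist_le_mul.mp (hζn_lip n)) a b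
  -- extract an a.e. convergent subsequence
  have hp₁0 : (ENNReal.ofReal q₁) ≠ 0 := (ENNReal.ofReal_pos.mpr (by linarith)).ne'
  have hTIM : TendstoInMeasure μ (fun n x => ζn n (vn n x)) atTop u := by
    refine tendstoInMeasure_of_tendsto_eLpNorm hp₁0 (fun n => (hζnvn n).1) hu.1 ?_
    simpa [Pi.sub_def] using hstrong
  obtain ⟨ns, hns, hae⟩ := hTIM.exists_seq_tendsto_ae
  -- measurable representatives
  set V : ℕ → α → ℝ := fun n => (hvn n).1.mk (vn n) with hV
  have hVm : ∀ n, StronglyMeasurable (V n) := fun n => (hvn n).1.stronglyMeasurable_mk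
  have hVe : ∀ n, vn n =ᵐ[μ] V n := fun n => (hvn n).1.ae_eq_mk
  set v' : α → ℝ := hv.1.mk v with hv'
  have hv'm : StronglyMeasurable v' := hv.1.stronglyMeasurable_mk
  have hv'e : v =ᵐ[μ] v' := hv.1.ae_eq_mk
  set u' : α → ℝ := hu.1.mk u with hu'
  have hu'm : StronglyMeasurable u' := hu.1.stronglyMeasurable_mk
  have hu'e : u =ᵐ[μ] u' := hu.1.ae_eq_mk
  set f' : ℕ → α → ℝ := fun i x => ζn (ns i) (V (ns i) x) with hf'
  have hf'm : ∀ i, StronglyMeasurable (f' i) :=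
    fun i => (hζn_lip (ns i)).continuous.comp_stronglyMeasurable (hVm (ns i))
  set g' : ℕ → α → ℝ := fun i x => ζn (ns i) (v' x) with hg'
  have hg'm : ∀ i, StronglyMeasurable (g' i) :=
    fun i => (hζn_lip (ns i)).continuous.comp_stronglyMeasurable hv'm
  have hg'pt : ∀ x, Tendsto (fun i => g' i x) atTop (nhds (ζ (v' x))) :=
    fun x => (hζn_ptwise (v' x)).comp hns.tendsto_atTop
  have hae' : ∀ᵐ x ∂μ, Tendsto (fun i => f' i x) atTop (nhds (u' x)) := by
    filter_upwards [hae, hu'e, ae_all_iff.2 fun i => hVe (ns i)] with x hx hux hVx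
    have h1 : (fun i => f' i x) = fun i => ζn (ns i) (vn (ns i) x) := by
      funext i; simp only [hf', ← hVx i]
    rw [h1, ← hux]
    exact hx
  -- ζ ∘ v' measurable
  have hζv'm : StronglyMeasurable (fun x => ζ (v' x)) :=
    hζlip.continuous.comp_stronglyMeasurable hv'm
  -- integrability facts
  have hq₂1 : (1 : ℝ≥0∞) ≤ ENNReal.ofReal q₂ := by
    rw [ENNReal.one_le_ofReal]; linarith
  have hVint : ∀ n, Integrable (V n) μ :=
    fun n => (((hvn n).integrable hq₂1).congr (hVe n))
  have hv'int : Integrable v' μ := (hv.integrable hq₂1).congr hv'e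
  -- main claim
  have claim : ∀ ε : ℝ, 0 < ε → μ {x | ε + ζ (v' x) ≤ u' x} = 0 := by
    intro ε hε
    set E := {x | ε + ζ (v' x) ≤ u' x} with hE
    have hEm : MeasurableSet E :=
      measurableSet_le ((measurable_const.add hζv'm.measurable)) hu'm.measurable
    have hEbound : ∀ σ : ℝ, 0 < σ → μ E ≤ ENNReal.ofReal σ + ENNReal.ofReal σ := by
      intro σ hσ
      obtain ⟨t₁, ht₁sub, ht₁m, ht₁μ, hU₁⟩ :=
        tendstoUniformlyOn_of_ae_tendsto hf'm hu'm hEm (measure_ne_top μ E)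
          (hae'.mono fun x hx _ => hx) hσ
      obtain ⟨t₂, ht₂sub, ht₂m, ht₂μ, hU₂⟩ :=
        tendstoUniformlyOn_of_ae_tendsto hg'm hζv'm hEm (measure_ne_top μ E)
          (ae_of_all μ fun x _ => hg'pt x) hσ
      set F := E \ (t₁ ∪ t₂) with hF
      have hFm : MeasurableSet F := hEm.diff (ht₁m.union ht₂m)
      have hFsub : F ⊆ E := Set.diff_subset
      have hU₁' : TendstoUniformlyOn f' u' atTop F :=
        hU₁.mono (Set.diff_subset_diff_right Set.subset_union_left)
      have hU₂' : TendstoUniformlyOn g' (fun x => ζ (v' x)) atTop F :=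
        hU₂.mono (Set.diff_subset_diff_right Set.subset_union_right)
      have hε4 : 0 < ε / 4 := by linarith
      have hev : ∀ᶠ i in atTop, ∀ x ∈ F,
          v' x + ε / (2 * L) ≤ V (ns i) x := by
        have h1 := (Metric.tendstoUniformlyOn_iff.mp hU₁') (ε / 4) hε4
        have h2 := (Metric.tendstoUniformlyOn_iff.mp hU₂') (ε / 4) hε4
        filter_upwards [h1, h2] with i hi1 hi2 x hxF
        have hxE : ε + ζ (v' x) ≤ u' x := hFsub hxF
        have d1 : |u' x - f' i x| < ε / 4 := by
          have := hi1 x hxF; rwa [Real.dist_eq] at this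
        have d2 : |ζ (v' x) - g' i x| < ε / 4 := by
          have := hi2 x hxF; rwa [Real.dist_eq] at this
        have habs1 : u' x - f' i x < ε / 4 := lt_of_abs_lt d1
        have habs2 : g' i x - ζ (v' x) < ε / 4 := by
          have := neg_abs_le (ζ (v' x) - g' i x); nlinarith [abs_nonneg (ζ (v' x) - g' i x), lt_of_abs_lt d2, neg_lt_of_abs_lt d2]
        have hgap : g' i x + ε / 2 ≤ f' i x := by linarith
        -- monotonicity: v' x ≤ V (ns i) x
        have hmono : v' x ≤ V (ns i) x := by
          by_contra hc
          push_neg at hc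
          have := hζn_mono (ns i) hc.le
          simp only [hf', hg'] at hgap
          have hε2 : (0:ℝ) < ε / 2 := by linarith
          linarith
        -- Lipschitz bound
        have hlipb : f' i x - g' i x ≤ L * (V (ns i) x - v' x) := by
          have := (lipschitzWith_iff_dist_le_mul.mp (hζn_lip (ns i))) (V (ns i) x) (v' x)
          rw [Real.dist_eq, Real.dist_eq, hLL] at this
          have h1 : |ζn (ns i) (V (ns i) x) - ζn (ns i) (v' x)| ≤ L * |V (ns i) x - v' x| := this
          have h2 : |V (ns i) x - v' x| = V (ns i) x - v' x := abs_of_nonneg (by linarith)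
          calc f' i x - g' i x ≤ |ζn (ns i) (V (ns i) x) - ζn (ns i) (v' x)| := le_abs_self _
            _ ≤ L * |V (ns i) x - v' x| := h1
            _ = L * (V (ns i) x - v' x) := by rw [h2]
        have : ε / 2 ≤ L * (V (ns i) x - v' x) := by linarith
        have hdiv : ε / (2 * L) ≤ V (ns i) x - v' x := by
          rw [div_le_iff₀ (by positivity)] at this ⊢
          nlinarith
        linarith
      -- weak convergence tested against the indicator of F
      have hind : MemLp (F.indicator fun _ => (1:ℝ)) (ENNReal.ofReal (q₂ / (q₂ - 1))) μ :=
        memLp_indicator_const _ hFm 1 (Or.inr (measure_ne_top μ F))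
      have hmul : ∀ f : α → ℝ,
          (fun x => f x * (F.indicator fun _ => (1:ℝ)) x) = F.indicator f := by
        intro f; funext x
        by_cases hx : x ∈ F <;> simp [Set.indicator_apply, hx]
      have hweakF : Tendsto (fun n => ∫ x in F, vn n x ∂μ) atTop (nhds (∫ x in F, v x ∂μ)) := by
        have := hweak _ hind
        simp_rw [hmul, integral_indicator hFm] at this
        exact this
      have hweakF' : Tendsto (fun i => ∫ x in F, vn (ns i) x ∂μ) atTop
          (nhds (∫ x in F, v x ∂μ)) := hweakF.comp hns.tendsto_atTop
      set δ := ε / (2 * L) with hδdef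
      have hδ : 0 < δ := by positivity
      have hkey : ∀ᶠ i in atTop,
          (∫ x in F, v' x ∂μ) + δ * (μ F).toReal ≤ ∫ x in F, vn (ns i) x ∂μ := by
        filter_upwards [hev] with i hi
        have e1 : ∫ x in F, vn (ns i) x ∂μ = ∫ x in F, V (ns i) x ∂μ :=
          integral_congr_ae (ae_restrict_of_ae (hVe (ns i)))
        have e2 : ∫ x in F, (v' x + δ) ∂μ ≤ ∫ x in F, V (ns i) x ∂μ := by
          refine setIntegral_mono_on ?_ ?_ hFm ?_
          · exact (hv'int.add (integrable_const δ)).integrableOn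
          · exact (hVint (ns i)).integrableOn
          · intro x hx; linarith [hi x hx]
        have e3 : ∫ x in F, (v' x + δ) ∂μ
            = (∫ x in F, v' x ∂μ) + δ * (μ F).toReal := by
          rw [integral_add hv'int.integrableOn (integrable_const δ).integrableOn,
            setIntegral_const]
          simp [smul_eq_mul, mul_comm, Measure.real]
        rw [e1]
        linarith
      have e4 : ∫ x in F, v x ∂μ = ∫ x in F, v' x ∂μ :=
        integral_congr_ae (ae_restrict_of_ae hv'e)
      have hle : (∫ x in F, v' x ∂μ) + δ * (μ F).toReal ≤ ∫ x in F, v' x ∂μ := by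
        have := ge_of_tendsto hweakF' hkey
        rw [e4] at this
        exact this
      have hμF0 : (μ F).toReal = 0 := by
        have h0 : δ * (μ F).toReal ≤ 0 := by linarith
        nlinarith [ENNReal.toReal_nonneg (a := μ F)]
      have hμF : μ F = 0 := by
        rcases (ENNReal.toReal_eq_zero_iff _).mp hμF0 with h | h
        · exact h
        · exact absurd h (measure_ne_top μ F)
      calc μ E ≤ μ (F ∪ (t₁ ∪ t₂)) := measure_mono (by
            intro x hx
            by_cases h : x ∈ t₁ ∪ t₂
            · exact Or.inr h
            · exact Or.inl ⟨hx, h⟩)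
        _ ≤ μ F + μ (t₁ ∪ t₂) := measure_union_le _ _
        _ ≤ 0 + (μ t₁ + μ t₂) := by
            exact add_le_add (le_of_eq hμF) (measure_union_le _ _)
        _ ≤ ENNReal.ofReal σ + ENNReal.ofReal σ := by
            rw [zero_add]; exact add_le_add ht₁μ ht₂μ
    -- conclude μ E = 0
    by_contra hne
    have hpos : 0 < μ E := pos_iff_ne_zero.mpr hne
    have hfin : μ E ≠ ⊤ := measure_ne_top μ E
    have hrpos : 0 < (μ E).toReal := ENNReal.toReal_pos hne hfin
    have := hEbound ((μ E).toReal / 4) (by linarith)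
    rw [← ENNReal.ofReal_add (by linarith) (by linarith)] at this
    have h2 : (μ E).toReal / 4 + (μ E).toReal / 4 = (μ E).toReal / 2 := by ring
    rw [h2] at this
    have h3 : (μ E).toReal ≤ (ENNReal.ofReal ((μ E).toReal / 2)).toReal :=
      ENNReal.toReal_mono ENNReal.ofReal_ne_top this
    rw [ENNReal.toReal_ofReal (by linarith)] at h3
    linarith
  -- from the claim to the a.e. inequality
  have hnull : μ {x | ζ (v' x) < u' x} = 0 := by
    have hsub : {x | ζ (v' x) < u' x} ⊆
        ⋃ m : ℕ, {x | 1 / (m + 1 : ℝ) + ζ (v' x) ≤ u' x} := by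
      intro x hx
      obtain ⟨m, hm⟩ := exists_nat_one_div_lt (K := ℝ) (sub_pos.mpr hx)
      exact Set.mem_iUnion.mpr ⟨m, by simp only [Set.mem_setOf_eq]; linarith⟩
    refine measure_mono_null hsub (measure_iUnion_null fun m => claim _ (by positivity))
  have hae_le : ∀ᵐ x ∂μ, u' x ≤ ζ (v' x) := by
    rw [ae_iff]
    simpa [not_le] using hnull
  filter_upwards [hae_le, hu'e, hv'e] with x h h1 h2
  rw [h1, h2]
  exact h

/-- Minty's trick in Lebesgue spaces. -/
theorem stmt_12 (N : ℕ) (Ω : Set (EuclideanSpace ℝ (Fin N)))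
    (hΩ : MeasurableSet Ω) (hΩfin : volume Ω < ⊤)
    (q₁ q₂ : ℝ) (hq₁ : q₁ ∈ Set.Ioo (1 : ℝ) 2) (hq₂ : q₂ ∈ Set.Ioo (1 : ℝ) 2)
    (L : ℝ) (hL : 0 < L)
    (ζn : ℕ → ℝ → ℝ) (ζ : ℝ → ℝ)
    (hζn_mono : ∀ n, Monotone (ζn n))
    (hζn_lip : ∀ n, LipschitzWith (Real.toNNReal L) (ζn n))
    (hζn_zero : ∀ n, ζn n 0 = 0)
    (hζn_ptwise : ∀ s : ℝ, Tendsto (fun n => ζn n s) atTop (nhds (ζ s)))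
    (vn : ℕ → EuclideanSpace ℝ (Fin N) → ℝ) (v : EuclideanSpace ℝ (Fin N) → ℝ)
    (hvn : ∀ n, MemLp (vn n) (ENNReal.ofReal q₂) (volume.restrict Ω))
    (hv : MemLp v (ENNReal.ofReal q₂) (volume.restrict Ω))
    (hweak : ∀ g : EuclideanSpace ℝ (Fin N) → ℝ,
      MemLp g (ENNReal.ofReal (q₂ / (q₂ - 1))) (volume.restrict Ω) →
      Tendsto (fun n => ∫ x, vn n x * g x ∂(volume.restrict Ω)) atTop
        (nhds (∫ x, v x * g x ∂(volume.restrict Ω))))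
    (u : EuclideanSpace ℝ (Fin N) → ℝ)
    (hu : MemLp u (ENNReal.ofReal q₁) (volume.restrict Ω))
    (hζnvn : ∀ n, MemLp (fun x => ζn n (vn n x)) (ENNReal.ofReal q₁) (volume.restrict Ω))
    (hstrong : Tendsto
      (fun n => eLpNorm (fun x => ζn n (vn n x) - u x) (ENNReal.ofReal q₁) (volume.restrict Ω))
      atTop (nhds 0)) :
    ∀ᵐ x ∂(volume.restrict Ω), u x = ζ (v x) := by
  haveI : IsFiniteMeasure (volume.restrict Ω) :=
    ⟨by rwa [Measure.restrict_apply_univ]⟩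
  set μ := volume.restrict Ω with hμ
  -- upper bound
  have h₁ : ∀ᵐ x ∂μ, u x ≤ ζ (v x) :=
    minty_key μ q₁ q₂ hq₁.1 hq₂.1 L hL ζn ζ hζn_mono hζn_lip hζn_ptwise vn v hvn hv hweak
      u hu hζnvn hstrong
  -- lower bound via negation
  have h₂ : ∀ᵐ x ∂μ, -(u x) ≤ (fun s => -(ζ (-s))) (-(v x)) := by
    refine minty_key μ q₁ q₂ hq₁.1 hq₂.1 L hL (fun n s => -(ζn n (-s))) (fun s => -(ζ (-s)))
      (fun n a b hab => by
        simp only [neg_le_neg_iff]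
        exact hζn_mono n (neg_le_neg hab))
      (fun n => by
        rw [lipschitzWith_iff_dist_le_mul]
        intro a b
        rw [dist_neg_neg]
        have := (lipschitzWith_iff_dist_le_mul.mp (hζn_lip n)) (-a) (-b)
        rwa [dist_neg_neg] at this)
      (fun s => (hζn_ptwise (-s)).neg)
      (fun n x => -(vn n x)) (fun x => -(v x))
      (fun n => (hvn n).neg) hv.neg
      (fun g hg => by
        have := (hweak g hg).neg
        simp_rw [← integral_neg, ← neg_mul] at this
        exact this)
      (fun x => -(u x)) hu.neg
      (fun n => by
        simp only [neg_neg]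
        exact (hζnvn n).neg)
      (by
        have heq : ∀ n, (fun x => -(ζn n (-(-(vn n x)))) - -(u x))
            = fun x => -(ζn n (vn n x) - u x) := by
          intro n; funext x; simp; ring
        simp_rw [heq]
        have : ∀ n, eLpNorm (fun x => -(ζn n (vn n x) - u x)) (ENNReal.ofReal q₁) μ
            = eLpNorm (fun x => ζn n (vn n x) - u x) (ENNReal.ofReal q₁) μ := by
          intro n
          have : (fun x => -(ζn n (vn n x) - u x)) = -(fun x => ζn n (vn n x) - u x) := rfl
          rw [this, eLpNorm_neg]
        simp_rw [this]
        exact hstrong)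
  filter_upwards [h₁, h₂] with x hx1 hx2
  simp only [neg_neg, neg_le_neg_iff] at hx2
  linarith
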